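/- There exists a unique x̂ ∈ [0, ν̲) such that q(x) > 0 for all x ∈ (0, x̂) (in case x̂ > 0) and q(x) < 0 for all x ∈ (x̂, ν). -/

import Mathlib

open MeasureTheory Set Filter Topology

set_option linter.unusedVariables false

/-- `h(0) := lim_{x↓0} h(x) ∈ [-∞, ∞)`; for a right-continuous increasing `h` this is the
infimum of `h` over `(0, ∞)`, viewed in the extended reals. -/
noncomputable def hZero (h : ℝ → ℝ) : EReal := ⨅ x ∈ Set.Ioi (0 : ℝ), (h x : EReal)

/-- The particular solution `R_h` to the ODE `σ²x²w'' + bxw' - rw + h = 0`. -/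
noncomputable def Rh (σ m n : ℝ) (h : ℝ → ℝ) (x : ℝ) : ℝ :=
  (1 / (σ ^ 2 * (n - m))) *
    (x ^ m * (∫ s in Set.Ioc (0 : ℝ) x, s ^ (-m - 1) * h s)
      + x ^ n * ∫ s in Set.Ioi x, s ^ (-n - 1) * h s)

/-- The function `q` of Lemma `auxiliar_2`. -/
noncomputable def qAux (σ m n ν L : ℝ) (h : ℝ → ℝ) (x : ℝ) : ℝ :=
  (m * x ^ (m - 1) / (σ ^ 2 * (n - m))) * (∫ s in x..ν, s ^ (-m - 1) * (h s + L))
    - (n * x ^ (n - 1) / (σ ^ 2 * (n - m))) * ∫ s in x..ν, s ^ (-n - 1) * (h s + L)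

namespace Stmt2

noncomputable def B (n ν L : ℝ) (h : ℝ → ℝ) (x : ℝ) : ℝ :=
  ∫ s in x..ν, s ^ (-n - 1) * (h s + L)

noncomputable def F (m n ν L : ℝ) (h : ℝ → ℝ) (x : ℝ) : ℝ :=
  m * (∫ s in x..ν, s ^ (-m - 1) * (h s + L)) - n * x ^ (n - m) * B n ν L h x

noncomputable def G (n ν L : ℝ) (h : ℝ → ℝ) (x : ℝ) : ℝ :=
  x ^ (-n) * (h x + L) - n * B n ν L h x

variable {m n ν L : ℝ} {h : ℝ → ℝ}

lemma h_aesm (hMono : MonotoneOn h (Set.Ioi 0)) {a b : ℝ} (ha : 0 < a) :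
    AEStronglyMeasurable h (volume.restrict (Ioc a b)) := by
  have hmax : Monotone (fun t => h (max t a)) := by
    intro u v huv
    exact hMono (lt_of_lt_of_le ha (le_max_right _ _)) (lt_of_lt_of_le ha (le_max_right _ _))
      (max_le_max huv le_rfl)
  refine (hmax.measurable.aestronglyMeasurable).congr ?_
  rw [Filter.EventuallyEq, ae_restrict_iff' measurableSet_Ioc]
  filter_upwards with t ht
  simp [max_eq_left ht.1.le]

lemma f_aesm (hMono : MonotoneOn h (Set.Ioi 0)) {p a b : ℝ} (ha : 0 < a) :
    AEStronglyMeasurable (fun s => s ^ p * (h s + L)) (volume.restrict (Ioc a b)) := by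
  have hc : ContinuousOn (fun s : ℝ => s ^ p) (Ioc a b) :=
    continuousOn_id.rpow_const fun x hx => Or.inl (ne_of_gt (ha.trans hx.1))
  exact (hc.aestronglyMeasurable measurableSet_Ioc).mul
    ((h_aesm hMono ha).add aestronglyMeasurable_const)

lemma integrableOn_pow_mul (hMono : MonotoneOn h (Set.Ioi 0)) {p a b : ℝ} (ha : 0 < a) :
    IntegrableOn (fun s => s ^ p * (h s + L)) (Ioc a b) := by
  rcases le_or_gt b a with hba | hab
  · rw [Ioc_eq_empty (not_lt.2 hba)]; exact integrableOn_empty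
  · constructor
    · exact f_aesm hMono ha
    · refine HasFiniteIntegral.restrict_of_bounded
        (C := max (a ^ p) (b ^ p) * max |h a + L| |h b + L|) measure_Ioc_lt_top ?_
      rw [ae_restrict_iff' measurableSet_Ioc]
      filter_upwards with s hs
      have hs0 : 0 < s := ha.trans hs.1
      have h1 : |s ^ p| ≤ max (a ^ p) (b ^ p) := by
        rw [abs_of_nonneg (Real.rpow_nonneg hs0.le p)]
        rcases le_or_gt 0 p with hp | hp
        · exact le_max_of_le_right (Real.rpow_le_rpow hs0.le hs.2 hp)
        · exact le_max_of_le_left (Real.rpow_le_rpow_of_nonpos ha hs.1.le hp.le)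
      have h2 : |h s + L| ≤ max |h a + L| |h b + L| :=
        abs_le_max_abs_abs
          (by linarith [hMono ha (ha.trans hs.1) hs.1.le])
          (by linarith [hMono (ha.trans hs.1) (ha.trans_le (hs.1.le.trans hs.2)) hs.2])
      calc ‖s ^ p * (h s + L)‖ = |s ^ p| * |h s + L| := abs_mul _ _
        _ ≤ _ := mul_le_mul h1 h2 (abs_nonneg _) (le_trans (abs_nonneg _) h1)

lemma intInt (hMono : MonotoneOn h (Set.Ioi 0)) {p a b : ℝ} (ha : 0 < a) (hb : 0 < b) :
    IntervalIntegrable (fun s => s ^ p * (h s + L)) volume a b := by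
  rw [intervalIntegrable_iff]
  exact integrableOn_pow_mul hMono (lt_min ha hb)

lemma int_split (hMono : MonotoneOn h (Set.Ioi 0)) {p x y z : ℝ} (hx : 0 < x) (hy : 0 < y)
    (hz : 0 < z) :
    (∫ s in x..z, s ^ p * (h s + L))
      = (∫ s in x..y, s ^ p * (h s + L)) + ∫ s in y..z, s ^ p * (h s + L) :=
  (intervalIntegral.integral_add_adjacent_intervals (intInt hMono hx hy)
    (intInt hMono hy hz)).symm

lemma B_split (hMono : MonotoneOn h (Set.Ioi 0)) {x y : ℝ} (hx : 0 < x) (hy : 0 < y)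
    (hν : 0 < ν) :
    B n ν L h x = (∫ s in x..y, s ^ (-n - 1) * (h s + L)) + B n ν L h y :=
  int_split hMono hx hy hν

lemma G_mono (hMono : MonotoneOn h (Set.Ioi 0)) (hn : 0 < n) {x y : ℝ}
    (hx : 0 < x) (hxy : x ≤ y) (hyν : y ≤ ν) :
    G n ν L h x ≤ G n ν L h y := by
  have hy : 0 < y := hx.trans_le hxy
  have hν : 0 < ν := hy.trans_le hyν
  have hBs := B_split (n := n) (ν := ν) (L := L) hMono hx hy hν
  have hcont : ContinuousOn (fun s : ℝ => s ^ (-n - 1) * (h x + L)) (uIcc x y) := by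
    apply ContinuousOn.mul _ continuousOn_const
    refine continuousOn_id.rpow_const fun t ht => Or.inl ?_
    rw [uIcc_of_le hxy] at ht
    exact ne_of_gt (hx.trans_le ht.1)
  have hcmp : (∫ s in x..y, s ^ (-n - 1) * (h x + L))
      ≤ ∫ s in x..y, s ^ (-n - 1) * (h s + L) := by
    apply intervalIntegral.integral_mono_on hxy (hcont.intervalIntegrable) (intInt hMono hx hy)
    intro s hs
    have hs0 : 0 < s := lt_of_lt_of_le hx hs.1
    exact mul_le_mul_of_nonneg_left (by linarith [hMono hx hs0 hs.1])
      (Real.rpow_nonneg hs0.le _)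
  have hn' : (n : ℝ) ≠ 0 := ne_of_gt hn
  have hval : (∫ s in x..y, s ^ (-n - 1) * (h x + L))
      = (h x + L) * ((x ^ (-n) - y ^ (-n)) / n) := by
    rw [intervalIntegral.integral_mul_const, integral_rpow]
    · rw [show -n - 1 + 1 = -n by ring]
      rw [show (y ^ (-n) - x ^ (-n)) / (-n) = (x ^ (-n) - y ^ (-n)) / n by
        rw [div_neg, ← neg_div, neg_sub]]
      ring
    · refine Or.inr ⟨fun hc => hn' (by linarith), fun hc => ?_⟩
      rw [uIcc_of_le hxy] at hc
      exact absurd hc.1 (not_le.2 hx)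
  have hkey : 0 ≤ y ^ (-n) * (h y - h x) :=
    mul_nonneg (Real.rpow_nonneg hy.le _) (by linarith [hMono hx hy hxy])
  have hGG : G n ν L h y - G n ν L h x
      = y ^ (-n) * (h y + L) - x ^ (-n) * (h x + L)
        + n * ∫ s in x..y, s ^ (-n - 1) * (h s + L) := by
    simp only [G, hBs]; ring
  have e1 : n * ((h x + L) * ((x ^ (-n) - y ^ (-n)) / n)) = (h x + L) * (x ^ (-n) - y ^ (-n)) := by
    field_simp
  have hmul : (h x + L) * (x ^ (-n) - y ^ (-n))
      ≤ n * ∫ s in x..y, s ^ (-n - 1) * (h s + L) := by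
    rw [← e1, ← hval]
    exact mul_le_mul_of_nonneg_left hcmp hn.le
  have e2 : y ^ (-n) * (h y + L) - x ^ (-n) * (h x + L) + (h x + L) * (x ^ (-n) - y ^ (-n))
      = y ^ (-n) * (h y - h x) := by ring
  linarith

lemma F_nu (hν : 0 < ν) : F m n ν L h ν = 0 := by
  simp [F, B]

lemma F_sub (hMono : MonotoneOn h (Set.Ioi 0))
    (hRC : ∀ x : ℝ, 0 < x → ContinuousWithinAt h (Set.Ici x) x)
    (hm : m < 0) (hn : 0 < n) {x y : ℝ} (hx : 0 < x) (hxy : x ≤ y) (hyν : y ≤ ν) :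
    F m n ν L h y - F m n ν L h x
      = (n - m) * ∫ s in x..y, s ^ (n - m - 1) * G n ν L h s := by
  have hy : 0 < y := hx.trans_le hxy
  have hν : 0 < ν := hy.trans_le hyν
  have hxν : x ≤ ν := hxy.trans hyν
  set f : ℝ → ℝ := fun t => t ^ (-n - 1) * (h t + L) with hf
  have hBint : IntegrableOn f (uIcc x ν) := by
    rw [uIcc_of_le hxν, integrableOn_Icc_iff_integrableOn_Ioc]
    exact integrableOn_pow_mul hMono hx
  have hBcont : ContinuousOn (B n ν L h) (uIcc x ν) := by
    have := intervalIntegral.continuousOn_primitive_interval_left (μ := volume) hBint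
    exact this
  have hsub : Icc x y ⊆ uIcc x ν := by rw [uIcc_of_le hxν]; exact Icc_subset_Icc le_rfl hyν
  set Φ : ℝ → ℝ := fun u => u ^ (n - m) * B n ν L h u with hΦ
  set Φ' : ℝ → ℝ :=
    fun s => (n - m) * s ^ (n - m - 1) * B n ν L h s - s ^ (-m - 1) * (h s + L) with hΦ'
  have hΦcont : ContinuousOn Φ (Icc x y) := by
    apply ContinuousOn.mul
    · exact continuousOn_id.rpow_const fun t ht => Or.inl (ne_of_gt (hx.trans_le ht.1))
    · exact hBcont.mono hsub
  have hderiv : ∀ s ∈ Ioo x y, HasDerivWithinAt Φ (Φ' s) (Ioi s) s := by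
    intro s hs
    have hs0 : 0 < s := hx.trans hs.1
    have hsν1 : s < ν + 1 := by linarith [hs.2.le.trans hyν]
    have hBd : HasDerivWithinAt (fun u => ∫ t in ν..u, f t) (f s) (Ici s) s := by
      apply intervalIntegral.integral_hasDerivWithinAt_right (t := Ioi s)
      · exact intInt hMono hν hs0
      · refine ⟨Ioo s (ν + 1), Ioo_mem_nhdsGT_of_mem ⟨le_rfl, hsν1⟩, ?_⟩
        refine (f_aesm (p := -n - 1) (L := L) (b := ν + 1) hMono (half_pos hs0)).mono_measure
          (Measure.restrict_mono (fun t ht => ?_) le_rfl)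
        exact ⟨by linarith [ht.1], by linarith [ht.2.le]⟩
      · apply ContinuousWithinAt.mul
        · exact ((Real.continuousAt_rpow_const s _ (Or.inl hs0.ne')).continuousWithinAt).mono
            Ioi_subset_Ici_self
        · exact (((hRC s hs0).add continuousWithinAt_const).mono Ioi_subset_Ici_self)
    have hBd2 : HasDerivWithinAt (B n ν L h) (-f s) (Ioi s) s := by
      refine HasDerivWithinAt.congr ((hBd.neg).mono (Ioi_subset_Ici le_rfl))
        (fun u _ => ?_) ?_
      · rw [B, intervalIntegral.integral_symm]; rfl
      · rw [B, intervalIntegral.integral_symm]; rfl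
    have hpowd : HasDerivAt (fun u : ℝ => u ^ (n - m)) ((n - m) * s ^ (n - m - 1)) s :=
      Real.hasDerivAt_rpow_const (Or.inl hs0.ne')
    have hprod := hpowd.hasDerivWithinAt.mul hBd2
    have heq : (n - m) * s ^ (n - m - 1) * B n ν L h s + s ^ (n - m) * -f s = Φ' s := by
      simp only [hΦ', hf]
      rw [show s ^ (n - m) * -(s ^ (-n - 1) * (h s + L))
          = -(s ^ (n - m) * s ^ (-n - 1) * (h s + L)) by ring,
        ← Real.rpow_add hs0, show n - m + (-n - 1) = -m - 1 by ring]
      ring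
    rw [heq] at hprod
    exact hprod
  have hint' : IntervalIntegrable Φ' volume x y := by
    apply IntervalIntegrable.sub
    · apply ContinuousOn.intervalIntegrable
      rw [uIcc_of_le hxy]
      apply ContinuousOn.mul
      · exact continuousOn_const.mul
          (continuousOn_id.rpow_const fun t ht => Or.inl (ne_of_gt (hx.trans_le ht.1)))
      · exact hBcont.mono hsub
    · exact intInt hMono hx hy
  have hFTC : (∫ s in x..y, Φ' s) = Φ y - Φ x :=
    intervalIntegral.integral_eq_sub_of_hasDeriv_right_of_le hxy hΦcont hderiv hint'
  have hsplitA := int_split (p := -m - 1) (L := L) hMono hx hy hν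
  have hcongr : (∫ s in x..y, (n - m) * (s ^ (n - m - 1) * G n ν L h s))
      = ∫ s in x..y, (-m * (s ^ (-m - 1) * (h s + L)) - n * Φ' s) := by
    apply intervalIntegral.integral_congr
    intro s hs
    rw [uIcc_of_le hxy] at hs
    have hs0 : 0 < s := lt_of_lt_of_le hx hs.1
    have e : s ^ (n - m - 1) * s ^ (-n) = s ^ (-m - 1) := by
      rw [← Real.rpow_add hs0]; congr 1; ring
    simp only [G, hΦ']
    linear_combination (n - m) * (h s + L) * e
  have hi1 : IntervalIntegrable (fun s => -m * (s ^ (-m - 1) * (h s + L))) volume x y :=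
    (intInt hMono hx hy).const_mul _
  have hi2 : IntervalIntegrable (fun s => n * Φ' s) volume x y := hint'.const_mul _
  have hsubint : (∫ s in x..y, (-m * (s ^ (-m - 1) * (h s + L)) - n * Φ' s))
      = -m * (∫ s in x..y, s ^ (-m - 1) * (h s + L)) - n * ∫ s in x..y, Φ' s := by
    rw [intervalIntegral.integral_sub hi1 hi2, intervalIntegral.integral_const_mul,
      intervalIntegral.integral_const_mul]
  have hpull : (n - m) * (∫ s in x..y, s ^ (n - m - 1) * G n ν L h s)
      = ∫ s in x..y, (n - m) * (s ^ (n - m - 1) * G n ν L h s) :=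
    (intervalIntegral.integral_const_mul _ _).symm
  have hFdef : F m n ν L h y - F m n ν L h x
      = m * ((∫ s in y..ν, s ^ (-m - 1) * (h s + L)) - ∫ s in x..ν, s ^ (-m - 1) * (h s + L))
        - n * (Φ y - Φ x) := by
    simp only [F, hΦ]; ring
  rw [hFdef, hpull, hcongr, hsubint, hFTC, hsplitA]
  ring

lemma intG (hMono : MonotoneOn h (Set.Ioi 0)) {x y : ℝ}
    (hx : 0 < x) (hxy : x ≤ y) (hyν : y ≤ ν) :
    IntervalIntegrable (fun s => s ^ (n - m - 1) * G n ν L h s) volume x y := by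
  have hy : 0 < y := hx.trans_le hxy
  have hν : 0 < ν := hy.trans_le hyν
  have hxν : x ≤ ν := hxy.trans hyν
  have hBint : IntegrableOn (fun t : ℝ => t ^ (-n - 1) * (h t + L)) (uIcc x ν) := by
    rw [uIcc_of_le hxν, integrableOn_Icc_iff_integrableOn_Ioc]
    exact integrableOn_pow_mul hMono hx
  have hBcont : ContinuousOn (B n ν L h) (uIcc x ν) :=
    intervalIntegral.continuousOn_primitive_interval_left (μ := volume) hBint
  have hsub : uIcc x y ⊆ uIcc x ν := by
    rw [uIcc_of_le hxν, uIcc_of_le hxy]; exact Icc_subset_Icc le_rfl hyν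
  have h2 : IntervalIntegrable
      (fun s => s ^ (-m - 1) * (h s + L) - n * (s ^ (n - m - 1) * B n ν L h s)) volume x y := by
    refine (intInt hMono hx hy).sub (ContinuousOn.intervalIntegrable ?_)
    apply continuousOn_const.mul
    apply ContinuousOn.mul
    · refine continuousOn_id.rpow_const fun t ht => Or.inl ?_
      rw [uIcc_of_le hxy] at ht
      exact ne_of_gt (hx.trans_le ht.1)
    · exact hBcont.mono hsub
  refine h2.congr_ae ?_
  rw [Filter.EventuallyEq, ae_restrict_iff' measurableSet_uIoc]
  filter_upwards with s hs
  rw [uIoc_of_le hxy] at hs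
  have hs0 : 0 < s := hx.trans hs.1
  have e : s ^ (n - m - 1) * s ^ (-n) = s ^ (-m - 1) := by
    rw [← Real.rpow_add hs0]; congr 1; ring
  simp only [G]
  linear_combination (-(h s + L)) * e

lemma Gneg (hMono : MonotoneOn h (Set.Ioi 0)) (hn : 0 < n) {x y : ℝ}
    (hx : 0 < x) (hxy : x ≤ y) (hyν : y ≤ ν)
    (hI : (∫ s in x..y, s ^ (n - m - 1) * G n ν L h s) < 0) : G n ν L h x < 0 := by
  by_contra hc
  push_neg at hc
  have h0 : 0 ≤ ∫ s in x..y, s ^ (n - m - 1) * G n ν L h s := by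
    apply intervalIntegral.integral_nonneg hxy
    intro u hu
    have hu0 : 0 < u := hx.trans_le hu.1
    exact mul_nonneg (Real.rpow_nonneg hu0.le _)
      (le_trans hc (G_mono hMono hn hx hu.1 (hu.2.trans hyν)))
  linarith

lemma F_lt (hMono : MonotoneOn h (Set.Ioi 0))
    (hRC : ∀ x : ℝ, 0 < x → ContinuousWithinAt h (Set.Ici x) x)
    (hm : m < 0) (hn : 0 < n) {x y : ℝ} (hx : 0 < x) (hxy : x < y) (hyν : y ≤ ν)
    (hGy : G n ν L h y < 0) : F m n ν L h y < F m n ν L h x := by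
  have hy : 0 < y := hx.trans hxy
  have hkey := F_sub (L := L) hMono hRC hm hn hx hxy.le hyν
  have hcontp : ContinuousOn (fun s : ℝ => s ^ (n - m - 1)) (uIcc x y) := by
    refine continuousOn_id.rpow_const fun t ht => Or.inl ?_
    rw [uIcc_of_le hxy.le] at ht
    exact ne_of_gt (hx.trans_le ht.1)
  have hmono2 : (∫ s in x..y, s ^ (n - m - 1) * G n ν L h s)
      ≤ ∫ s in x..y, s ^ (n - m - 1) * G n ν L h y := by
    apply intervalIntegral.integral_mono_on hxy.le (intG hMono hx hxy.le hyν)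
      ((hcontp.mul continuousOn_const).intervalIntegrable)
    intro u hu
    have hu0 : 0 < u := hx.trans_le hu.1
    exact mul_le_mul_of_nonneg_left (G_mono hMono hn hu0 hu.2 hyν)
      (Real.rpow_nonneg hu0.le _)
  have hposint : 0 < ∫ s in x..y, s ^ (n - m - 1) := by
    apply intervalIntegral.intervalIntegral_pos_of_pos_on (hcontp.intervalIntegrable)
      (fun u hu => Real.rpow_pos_of_pos (hx.trans hu.1) _) hxy
  have hval : (∫ s in x..y, s ^ (n - m - 1) * G n ν L h y)
      = (∫ s in x..y, s ^ (n - m - 1)) * G n ν L h y :=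
    intervalIntegral.integral_mul_const _ _
  have hneg : (∫ s in x..y, s ^ (n - m - 1) * G n ν L h s) < 0 := by
    rw [hval] at hmono2
    exact lt_of_le_of_lt hmono2 (mul_neg_of_pos_of_neg hposint hGy)
  nlinarith
lemma qF {σ x : ℝ} (hx : 0 < x) :
    qAux σ m n ν L h x = x ^ (m - 1) / (σ ^ 2 * (n - m)) * F m n ν L h x := by
  have e : x ^ (m - 1) * x ^ (n - m) = x ^ (n - 1) := by
    rw [← Real.rpow_add hx]; congr 1; ring
  simp only [qAux, F, B]
  linear_combination
    (n * (∫ s in x..ν, s ^ (-n - 1) * (h s + L)) / (σ ^ 2 * (n - m))) * e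

end Stmt2

theorem statement_2
    (r b σ m n : ℝ) (h : ℝ → ℝ)
    (hr : 0 < r) (hσ : σ ≠ 0) (hm : m < 0) (hn : 0 < n)
    (hmRoot : σ ^ 2 * m ^ 2 + (b - σ ^ 2) * m - r = 0)
    (hnRoot : σ ^ 2 * n ^ 2 + (b - σ ^ 2) * n - r = 0)
    (hMono : MonotoneOn h (Set.Ioi 0))
    (hRC : ∀ x : ℝ, 0 < x → ContinuousWithinAt h (Set.Ici x) x)
    (hTop : Tendsto h atTop atTop)
    (hIntZero : ∀ x : ℝ, 0 < x →
      IntegrableOn (fun s : ℝ => s ^ (-m - 1) * h s) (Set.Ioc 0 x))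
    (hIntTop : ∀ x : ℝ, 0 < x →
      IntegrableOn (fun s : ℝ => s ^ (-n - 1) * h s) (Set.Ioi x))
    (ν L : ℝ)
    (hL : hZero h + (L : EReal) < 0)
    (hν : sInf {x : ℝ | 0 < x ∧ 0 < h x + L} < ν) :
    ∃! xhat : ℝ,
      (0 ≤ xhat ∧ xhat < sInf {x : ℝ | 0 < x ∧ 0 ≤ h x + L}) ∧
      (∀ x : ℝ, 0 < x → x < xhat → 0 < qAux σ m n ν L h x) ∧
      (∀ x : ℝ, xhat < x → x < ν → qAux σ m n ν L h x < 0) := by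
  have hnm : (0:ℝ) < n - m := by linarith
  have hσ2 : (0:ℝ) < σ ^ 2 := by positivity
  have hx0 : ∃ x : ℝ, 0 < x ∧ h x + L < 0 := by
    by_contra hcon
    push_neg at hcon
    have hlow : ((-L : ℝ) : EReal) ≤ hZero h := by
      rw [hZero]
      refine le_iInf₂ fun x hx => ?_
      have hhx : -L ≤ h x := by linarith [hcon x hx]
      exact_mod_cast hhx
    have h2 : ((-L : ℝ) : EReal) + (L : EReal) ≤ hZero h + (L : EReal) :=
      add_le_add_left hlow _
    rw [← EReal.coe_add] at h2
    norm_num at h2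
    exact absurd hL (not_lt.2 h2)
  obtain ⟨x₀, hx₀pos, hx₀neg⟩ := hx0
  set S1 := {x : ℝ | 0 < x ∧ 0 ≤ h x + L} with hS1def
  set S2 := {x : ℝ | 0 < x ∧ 0 < h x + L} with hS2def
  have hS2ne : S2.Nonempty := by
    obtain ⟨x, hx1, hx2⟩ := ((hTop.eventually_gt_atTop (-L)).and (eventually_gt_atTop 0)).exists
    exact ⟨x, hx2, by linarith⟩
  have hS1ne : S1.Nonempty := by
    obtain ⟨x, hx1, hx2⟩ := hS2ne
    exact ⟨x, hx1, hx2.le⟩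
  set νl := sInf S1 with hνldef
  have hlb : ∀ t ∈ S1, x₀ ≤ t := by
    intro t ht
    by_contra hc
    push_neg at hc
    have hmono := hMono ht.1 hx₀pos hc.le
    linarith [ht.2, hmono]
  have hνlpos : 0 < νl := lt_of_lt_of_le hx₀pos (le_csInf hS1ne hlb)
  have hbddS1 : BddBelow S1 := ⟨0, fun t ht => ht.1.le⟩
  obtain ⟨ν₀, hν₀S, hν₀ν⟩ := exists_lt_of_csInf_lt hS2ne hν
  have hν₀pos : 0 < ν₀ := hν₀S.1
  have hνlν₀ : νl ≤ ν₀ := csInf_le hbddS1 ⟨hν₀S.1, hν₀S.2.le⟩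
  have hνlν : νl < ν := lt_of_le_of_lt hνlν₀ hν₀ν
  have hνpos : 0 < ν := hνlpos.trans hνlν
  have hge : ∀ s, νl < s → 0 ≤ h s + L := by
    intro s hs
    obtain ⟨t, htS, hts⟩ := exists_lt_of_csInf_lt hS1ne hs
    have := hMono htS.1 (htS.1.trans hts) hts.le
    linarith [htS.2]
  have hge' : ∀ s, νl ≤ s → 0 ≤ h s + L := by
    intro s hs
    rcases eq_or_lt_of_le hs with heq | hlt
    · have htd : Tendsto h (𝓝[>] νl) (𝓝 (h νl)) :=
        (hRC νl hνlpos).mono_left (nhdsWithin_mono _ Ioi_subset_Ici_self)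
      have hev : ∀ᶠ t in 𝓝[>] νl, -L ≤ h t :=
        eventually_nhdsWithin_of_forall fun t ht => by linarith [hge t ht]
      have hlim := ge_of_tendsto htd hev
      rw [← heq]
      linarith
    · exact hge s hlt
  have Fneg : ∀ z, νl ≤ z → z < ν → Stmt2.F m n ν L h z < 0 := by
    intro z hz1 hz2
    have hz0 : 0 < z := hνlpos.trans_le hz1
    set z' := max z ν₀ with hz'def
    have hz'ν : z' < ν := max_lt hz2 hν₀ν
    have hz'0 : 0 < z' := hz0.trans_le (le_max_left _ _)
    have hzz' : z ≤ z' := le_max_left _ _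
    have hA : 0 ≤ ∫ s in z..ν, s ^ (-m - 1) * (h s + L) := by
      apply intervalIntegral.integral_nonneg hz2.le
      intro u hu
      exact mul_nonneg (Real.rpow_nonneg (hz0.trans_le hu.1).le _)
        (hge' u (hz1.trans hu.1))
    have hB1 : 0 ≤ ∫ s in z..z', s ^ (-n - 1) * (h s + L) := by
      apply intervalIntegral.integral_nonneg hzz'
      intro u hu
      exact mul_nonneg (Real.rpow_nonneg (hz0.trans_le hu.1).le _)
        (hge' u (hz1.trans hu.1))
    have hB2 : 0 < ∫ s in z'..ν, s ^ (-n - 1) * (h s + L) := by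
      apply intervalIntegral.intervalIntegral_pos_of_pos_on
        (Stmt2.intInt hMono hz'0 hνpos)
      · intro u hu
        have hu0 : 0 < u := hz'0.trans hu.1
        have hν₀u : ν₀ ≤ u := le_trans (le_max_right _ _) hu.1.le
        have := hMono hν₀pos hu0 hν₀u
        exact mul_pos (Real.rpow_pos_of_pos hu0 _) (by linarith [hν₀S.2])
      · exact hz'ν
    have hBpos : 0 < Stmt2.B n ν L h z := by
      rw [Stmt2.B_split hMono hz0 hz'0 hνpos]
      have hBz' : Stmt2.B n ν L h z' = ∫ s in z'..ν, s ^ (-n - 1) * (h s + L) := rfl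
      linarith
    have hxp : 0 < z ^ (n - m) := Real.rpow_pos_of_pos hz0 _
    have h1 : m * (∫ s in z..ν, s ^ (-m - 1) * (h s + L)) ≤ 0 :=
      mul_nonpos_iff.mpr (Or.inr ⟨hm.le, hA⟩)
    have h2 : 0 < n * z ^ (n - m) * Stmt2.B n ν L h z :=
      mul_pos (mul_pos hn hxp) hBpos
    show Stmt2.F m n ν L h z < 0
    simp only [Stmt2.F]
    linarith
  set T := {t : ℝ | 0 < t ∧ t < ν ∧ 0 < Stmt2.F m n ν L h t} with hTdef
  have hTνl : ∀ t ∈ T, t < νl := by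
    intro t ht
    by_contra hc
    push_neg at hc
    exact absurd ht.2.2 (not_lt.2 (Fneg t hc ht.2.1).le)
  set xhat := sSup (insert 0 T) with hxhatdef
  have hne : (insert (0:ℝ) T).Nonempty := insert_nonempty _ _
  have hbdd : BddAbove (insert (0:ℝ) T) := by
    refine ⟨νl, ?_⟩
    rintro t (rfl | ht)
    · exact hνlpos.le
    · exact (hTνl t ht).le
  have hxhat0 : 0 ≤ xhat := le_csSup hbdd (mem_insert _ _)
  have hxhatνl : xhat ≤ νl :=
    csSup_le hne (by rintro t (rfl | ht); exacts [hνlpos.le, (hTνl t ht).le])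
  have hFν : Stmt2.F m n ν L h ν = 0 := Stmt2.F_nu hνpos
  have hdown : ∀ t ∈ T, ∀ u, 0 < u → u < t → u ∈ T := by
    intro t ht u hu hut
    have hks := Stmt2.F_sub (L := L) hMono hRC hm hn ht.1 ht.2.1.le le_rfl
    have hI : (∫ s in t..ν, s ^ (n - m - 1) * Stmt2.G n ν L h s) < 0 := by
      nlinarith [ht.2.2]
    have hGt : Stmt2.G n ν L h t < 0 := Stmt2.Gneg hMono hn ht.1 ht.2.1.le le_rfl hI
    have hFlt := Stmt2.F_lt hMono hRC hm hn hu hut ht.2.1.le hGt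
    exact ⟨hu, hut.trans ht.2.1, lt_trans ht.2.2 hFlt⟩
  have hstrict : ∀ z, 0 < z → z < νl → Stmt2.F m n ν L h z = 0 →
      ∀ w, 0 < w → w < z → 0 < Stmt2.F m n ν L h w := by
    intro z hz hzνl hFz w hw hwz
    have hzν : z < ν := hzνl.trans hνlν
    have hFνl : Stmt2.F m n ν L h νl < 0 := Fneg νl le_rfl hνlν
    have hks := Stmt2.F_sub (L := L) hMono hRC hm hn hz hzνl.le hνlν.le
    have hI : (∫ s in z..νl, s ^ (n - m - 1) * Stmt2.G n ν L h s) < 0 := by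
      nlinarith
    have hGz : Stmt2.G n ν L h z < 0 := Stmt2.Gneg hMono hn hz hzνl.le hνlν.le hI
    have := Stmt2.F_lt hMono hRC hm hn hw hwz hzν.le hGz
    linarith
  have hxhatlt : xhat < νl := by
    rcases lt_or_eq_of_le hxhatνl with hlt | heq
    · exact hlt
    exfalso
    have hTpos : ∀ w, 0 < w → w < νl → 0 < Stmt2.F m n ν L h w := by
      intro w hw hwνl
      have hwx : w < xhat := by rw [heq]; exact hwνl
      obtain ⟨t, htmem, hwt⟩ := exists_lt_of_lt_csSup hne hwx
      rcases htmem with rfl | htT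
      · linarith
      · exact (hdown t htT w hw hwt).2.2
    have hFνl : Stmt2.F m n ν L h νl < 0 := Fneg νl le_rfl hνlν
    set a := νl / 2 with hadef
    have ha0 : 0 < a := by positivity
    have haνl : a < νl := by rw [hadef]; linarith
    set M := max (a ^ (n - m - 1)) (νl ^ (n - m - 1)) with hMdef
    have hM0 : 0 ≤ M := le_max_of_le_left (Real.rpow_nonneg ha0.le _)
    set C := M * (|Stmt2.G n ν L h a| + |Stmt2.G n ν L h νl|) with hCdef
    have hC0 : 0 ≤ C := mul_nonneg hM0 (by positivity)
    have hbound : ∀ u, u ∈ Icc a νl → -C ≤ u ^ (n - m - 1) * Stmt2.G n ν L h u := by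
      intro u hu
      have hu0 : 0 < u := ha0.trans_le hu.1
      have hup : |u ^ (n - m - 1)| ≤ M := by
        rw [abs_of_nonneg (Real.rpow_nonneg hu0.le _)]
        rcases le_or_gt 0 (n - m - 1) with hp | hp
        · exact le_max_of_le_right (Real.rpow_le_rpow hu0.le hu.2 hp)
        · exact le_max_of_le_left (Real.rpow_le_rpow_of_nonpos ha0 hu.1 hp.le)
      have huG : |Stmt2.G n ν L h u| ≤ |Stmt2.G n ν L h a| + |Stmt2.G n ν L h νl| := by
        have h1 := Stmt2.G_mono (L := L) hMono hn ha0 hu.1 (hu.2.trans hνlν.le)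
        have h2 := Stmt2.G_mono (L := L) hMono hn hu0 hu.2 hνlν.le
        exact (abs_le_max_abs_abs h1 h2).trans
          (max_le_add_of_nonneg (abs_nonneg _) (abs_nonneg _))
      have habs : |u ^ (n - m - 1) * Stmt2.G n ν L h u| ≤ C := by
        rw [abs_mul]
        exact mul_le_mul hup huG (abs_nonneg _) hM0
      linarith [neg_abs_le (u ^ (n - m - 1) * Stmt2.G n ν L h u)]
    set D := (n - m) * C + 1 with hDdef
    have hD0 : 0 < D := by
      rw [hDdef]
      have := mul_nonneg hnm.le hC0
      linarith
    set ε := min (νl / 2) (-(Stmt2.F m n ν L h νl) / (2 * D)) with hεdef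
    have hε0 : 0 < ε := lt_min (by positivity) (div_pos (by linarith) (by linarith))
    set w := νl - ε / 2 with hwdef
    have hεhalf : ε ≤ νl / 2 := min_le_left _ _
    have hwa : a ≤ w := by rw [hwdef, hadef]; linarith
    have hw0 : 0 < w := ha0.trans_le hwa
    have hwνl : w < νl := by rw [hwdef]; linarith
    have hFw : 0 < Stmt2.F m n ν L h w := hTpos w hw0 hwνl
    have hks := Stmt2.F_sub (L := L) hMono hRC hm hn hw0 hwνl.le hνlν.le
    have hmon : (∫ s in w..νl, (-C : ℝ))
        ≤ ∫ s in w..νl, s ^ (n - m - 1) * Stmt2.G n ν L h s := by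
      apply intervalIntegral.integral_mono_on hwνl.le intervalIntegrable_const
        (Stmt2.intG hMono hw0 hwνl.le hνlν.le)
      intro u hu
      exact hbound u ⟨hwa.trans hu.1, hu.2⟩
    rw [intervalIntegral.integral_const, smul_eq_mul] at hmon
    have hIlb : -(C * (νl - w)) ≤ ∫ s in w..νl, s ^ (n - m - 1) * Stmt2.G n ν L h s := by
      have e0 : (νl - w) * (-C) = -(C * (νl - w)) := by ring
      linarith
    have step1 : Stmt2.F m n ν L h νl ≥ Stmt2.F m n ν L h w - (n - m) * (C * (νl - w)) := by
      have e1 := mul_le_mul_of_nonneg_left hIlb hnm.le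
      have e2 : (n - m) * -(C * (νl - w)) = -((n - m) * (C * (νl - w))) := by ring
      linarith
    have hνlw : νl - w = ε / 2 := by rw [hwdef]; ring
    have e4 : (n - m) * (C * (νl - w)) = (n - m) * (C * (ε / 2)) := by rw [hνlw]
    have e5 : (n - m) * (C * (ε / 2)) < D * ε := by
      have p1 : 0 ≤ (n - m) * C * ε := mul_nonneg (mul_nonneg hnm.le hC0) hε0.le
      have e6 : D * ε = (n - m) * C * ε + ε := by rw [hDdef]; ring
      have e7 : (n - m) * (C * (ε / 2)) = ((n - m) * C * ε) / 2 := by ring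
      linarith
    have hεD : ε ≤ -(Stmt2.F m n ν L h νl) / (2 * D) := min_le_right _ _
    have h2D : D * ε ≤ D * (-(Stmt2.F m n ν L h νl) / (2 * D)) :=
      mul_le_mul_of_nonneg_left hεD hD0.le
    have h3 : D * (-(Stmt2.F m n ν L h νl) / (2 * D)) = -(Stmt2.F m n ν L h νl) / 2 := by
      field_simp
    clear_value a M C D ε w
    linarith
  have hq : ∀ x : ℝ, 0 < x →
      qAux σ m n ν L h x = x ^ (m - 1) / (σ ^ 2 * (n - m)) * Stmt2.F m n ν L h x :=
    fun x hx => Stmt2.qF hx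
  have hcpos : ∀ x : ℝ, 0 < x → 0 < x ^ (m - 1) / (σ ^ 2 * (n - m)) := fun x hx =>
    div_pos (Real.rpow_pos_of_pos hx _) (mul_pos hσ2 hnm)
  have prop1 : ∀ x : ℝ, 0 < x → x < xhat → 0 < qAux σ m n ν L h x := by
    intro x hx hxlt
    obtain ⟨t, htmem, hxt⟩ := exists_lt_of_lt_csSup hne hxlt
    have hxT : x ∈ T := by
      rcases htmem with rfl | htT
      · linarith
      · exact hdown t htT x hx hxt
    rw [hq x hx]
    exact mul_pos (hcpos x hx) hxT.2.2
  have prop2 : ∀ x : ℝ, xhat < x → x < ν → qAux σ m n ν L h x < 0 := by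
    intro x hxlt hxν
    have hx : 0 < x := lt_of_le_of_lt hxhat0 hxlt
    have hFle : Stmt2.F m n ν L h x ≤ 0 := by
      by_contra hc
      push_neg at hc
      exact absurd (le_csSup hbdd (mem_insert_of_mem _ ⟨hx, hxν, hc⟩)) (not_le.2 hxlt)
    have hFlt : Stmt2.F m n ν L h x < 0 := by
      rcases lt_or_eq_of_le hFle with hlt | heq
      · exact hlt
      exfalso
      rcases le_or_gt νl x with hca | hca
      · exact (ne_of_lt (Fneg x hca hxν)) heq
      · have hw := hstrict x hx hca heq
        have hwx : (xhat + x) / 2 < x := by linarith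
        have hw0 : 0 < (xhat + x) / 2 := by linarith
        have hFw := hw _ hw0 hwx
        have : (xhat + x) / 2 ≤ xhat :=
          le_csSup hbdd (mem_insert_of_mem _ ⟨hw0, hwx.trans hxν, hFw⟩)
        linarith
    rw [hq x hx]
    exact mul_neg_of_pos_of_neg (hcpos x hx) hFlt
  refine ⟨xhat, ⟨⟨hxhat0, hxhatlt⟩, prop1, prop2⟩, ?_⟩
  rintro y ⟨⟨hy0, hyνl⟩, hy1, hy2⟩
  by_contra hne'
  rcases lt_or_gt_of_ne hne' with hlt | hgt
  · set w := (y + xhat) / 2 with hwdef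
    have hw1 : y < w := by rw [hwdef]; linarith
    have hw2 : w < xhat := by rw [hwdef]; linarith
    have hw0 : 0 < w := by rw [hwdef]; linarith
    have hq1 := prop1 w hw0 hw2
    have hq2 := hy2 w hw1 (by linarith)
    linarith
  · set w := (xhat + y) / 2 with hwdef
    have hw1 : xhat < w := by rw [hwdef]; linarith
    have hw2 : w < y := by rw [hwdef]; linarith
    have hw0 : 0 < w := by rw [hwdef]; linarith
    have hyν' : y < ν := lt_trans hyνl hνlν
    have hq1 := hy1 w hw0 hw2
    have hq2 := prop2 w hw1 (by linarith)
    linarith
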